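/- Let T be a tournament, let v_0, v_1, …, v_k (with k ≥ 1 and v_0 ≠ v_k) be the vertices of a shortest directed path from v_0 to v_k in T, and let (D_0, D_1, …, D_{k+1}) be the associated path decomposition. If 0 ≤ i, j ≤ k+1 with j ≥ i+5, then for every u ∈ D_i and w ∈ D_j the arc between them is directed from w to u. -/
import Mathlib


/-- A tournament on a vertex type `V`: for every two distinct vertices exactly one
of the two possible arcs is present, and there are no loops. -/
structure Tournament (V : Type) where
  arc : V → V → Prop
  asymm : ∀ u v, arc u v → ¬ arc v u
  total : ∀ u v, u ≠ v → arc u v ∨ arc v u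

namespace Tournament

variable {V : Type}

/-- A set of vertices is transitive (acyclic) if it contains no directed triangle. -/
def IsTransitiveSet (T : Tournament V) (S : Set V) : Prop :=
  ∀ a ∈ S, ∀ b ∈ S, ∀ c ∈ S, ¬ (T.arc a b ∧ T.arc b c ∧ T.arc c a)

/-- Out-neighborhood `N⁺(v)`. -/
def outN (T : Tournament V) (v : V) : Set V := {w | T.arc v w}

/-- In-neighborhood `N⁻(v)`. -/
def inN (T : Tournament V) (v : V) : Set V := {w | T.arc w v}

/-- Arc neighborhood `N(uv)` of an arc `u → v`: vertices forming a directed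
triangle with the arc. -/
def arcNbhd (T : Tournament V) (u v : V) : Set V := {w | T.arc v w ∧ T.arc w u}

/-- `T.ColorableOn S k` means the induced subtournament `T[S]` can be partitioned
into at most `k` transitive sets. -/
def ColorableOn (T : Tournament V) (S : Set V) (k : ℕ) : Prop :=
  ∃ f : V → ℕ, (∀ v ∈ S, f v < k) ∧ ∀ i : ℕ, T.IsTransitiveSet {v | v ∈ S ∧ f v = i}

/-- The dichromatic number of `T`: the least `k` such that `V(T)` can be
partitioned into `k` transitive sets. -/
noncomputable def dichromaticNumber (T : Tournament V) : ℕ :=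
  sInf {k | T.ColorableOn Set.univ k}

/-- An arc `u → v` is heavy if `N(uv)` contains a directed triangle. -/
def IsHeavy (T : Tournament V) (u v : V) : Prop :=
  T.arc u v ∧ ∃ a b c,
    a ∈ T.arcNbhd u v ∧ b ∈ T.arcNbhd u v ∧ c ∈ T.arcNbhd u v ∧
    T.arc a b ∧ T.arc b c ∧ T.arc c a

/-- A tournament is light if it has no heavy arc. -/
def IsLight (T : Tournament V) : Prop := ∀ u v, ¬ T.IsHeavy u v

/-- The induced subtournament `T[S]` is light: for every arc within `S`, the part
of its arc neighborhood inside `S` is transitive. -/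
def LightOn (T : Tournament V) (S : Set V) : Prop :=
  ∀ u ∈ S, ∀ v ∈ S, T.arc u v → T.IsTransitiveSet (T.arcNbhd u v ∩ S)

/-- `S` is the vertex set of a directed triangle. -/
def IsTriangle (T : Tournament V) (S : Set V) : Prop :=
  ∃ a b c, S = {a, b, c} ∧ T.arc a b ∧ T.arc b c ∧ T.arc c a

/-- `S ⇒ U`: every arc between `S` and `U` is directed from `S` to `U`. -/
def Beats (T : Tournament V) (S U : Set V) : Prop :=
  ∀ s ∈ S, ∀ u ∈ U, T.arc s u

/-- `X 0, …, X (L-1)` is a `C₃`-chain of length `L`: pairwise vertex-disjoint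
directed triangles with `X i ⇒ X (i+1)`. -/
def IsC3Chain (T : Tournament V) (X : ℕ → Set V) (L : ℕ) : Prop :=
  (∀ i < L, T.IsTriangle (X i)) ∧
  (∀ i < L, ∀ j < L, i ≠ j → Disjoint (X i) (X j)) ∧
  (∀ i, i + 1 < L → T.Beats (X i) (X (i + 1)))

/-- `v 0, …, v k` are the vertices of a shortest directed path from `v 0` to `v k`:
consecutive arcs are present, and no directed path (walk) from `v 0` to `v k`
has fewer than `k` arcs. -/
def IsShortestPath (T : Tournament V) (v : ℕ → V) (k : ℕ) : Prop :=
  (∀ i < k, T.arc (v i) (v (i + 1))) ∧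
  (∀ m : ℕ, ∀ p : ℕ → V, p 0 = v 0 → p m = v k →
    (∀ i < m, T.arc (p i) (p (i + 1))) → k ≤ m)

/-- The path decomposition `D 0, …, D (k+1)` associated to the path `v 0, …, v k`:
`D 0 = N⁺(v 0)`, `D i = N(e i) \ (D 0 ∪ ⋯ ∪ D (i-1))` for `1 ≤ i ≤ k` where
`e i` is the arc `v (i-1) → v i`, and `D (k+1) = N⁻(v k) \ (D 0 ∪ ⋯ ∪ D k)`. -/
def PathDecomp (T : Tournament V) (v : ℕ → V) (k : ℕ) (D : ℕ → Set V) : Prop :=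
  D 0 = T.outN (v 0) ∧
  (∀ i, 1 ≤ i → i ≤ k → D i = T.arcNbhd (v (i - 1)) (v i) \ ⋃ j < i, D j) ∧
  D (k + 1) = T.inN (v k) \ ⋃ j < k + 1, D j

end Tournament


def shortcutPath {V : Type} (v q : ℕ → V) (i t r : ℕ) : ℕ → V := fun s =>
  if s ≤ i then v s else if s ≤ i + 1 + r then q (s - (i + 1))
  else v (t + (s - (i + 2 + r)))

lemma shortcut_aux {V : Type} (T : Tournament V) (k : ℕ) (v : ℕ → V)
    (hpath : T.IsShortestPath v k) (i t r : ℕ) (hik : i ≤ k) (htk : t ≤ k)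
    (q : ℕ → V) (h1 : T.arc (v i) (q 0)) (h2 : ∀ s < r, T.arc (q s) (q (s + 1)))
    (h3 : T.arc (q r) (v t)) : t ≤ i + 2 + r := by
  have key := hpath.2 (i + 2 + r + (k - t)) (shortcutPath v q i t r) ?_ ?_ ?_
  · omega
  · simp [shortcutPath]
  · simp only [shortcutPath]
    rw [if_neg (by omega), if_neg (by omega)]
    congr 1
    omega
  · intro s hs
    simp only [shortcutPath]
    by_cases h1s : s + 1 ≤ i
    · rw [if_pos (by omega : s ≤ i), if_pos h1s]
      exact hpath.1 s (by omega)
    · by_cases h2s : s ≤ i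
      · rw [if_pos h2s, if_neg h1s, if_pos (by omega : s + 1 ≤ i + 1 + r)]
        have hsi : s = i := by omega
        have e : s + 1 - (i + 1) = 0 := by omega
        rw [e, hsi]
        exact h1
      · by_cases h3s : s + 1 ≤ i + 1 + r
        · rw [if_neg h2s, if_neg h1s, if_pos (by omega : s ≤ i + 1 + r), if_pos h3s]
          have e : s + 1 - (i + 1) = (s - (i + 1)) + 1 := by omega
          rw [e]
          exact h2 _ (by omega)
        · by_cases h4s : s ≤ i + 1 + r
          · rw [if_neg h2s, if_neg h1s, if_pos h4s, if_neg h3s]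
            have e1 : s - (i + 1) = r := by omega
            have e2 : t + (s + 1 - (i + 2 + r)) = t := by omega
            rw [e1, e2]
            exact h3
          · rw [if_neg h2s, if_neg h1s, if_neg h4s, if_neg h3s]
            have e : t + (s + 1 - (i + 2 + r)) = (t + (s - (i + 2 + r))) + 1 := by omega
            rw [e]
            exact hpath.1 _ (by omega)

theorem stmt_1 {V : Type} [Fintype V] (T : Tournament V)
    (k : ℕ) (hk : 1 ≤ k) (v : ℕ → V) (hne : v 0 ≠ v k)
    (hpath : T.IsShortestPath v k)
    (D : ℕ → Set V) (hD : T.PathDecomp v k D)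
    (i j : ℕ) (hj : j ≤ k + 1) (hij : i + 5 ≤ j)
    (u w : V) (hu : u ∈ D i) (hw : w ∈ D j) :
    T.arc w u := by
  have hik : i ≤ k := by omega
  -- arc from v i to u
  have harc_vi_u : T.arc (v i) u := by
    rcases Nat.eq_zero_or_pos i with h0 | h0
    · subst h0
      rw [hD.1] at hu
      exact hu
    · rw [hD.2.1 i h0 hik] at hu
      exact hu.1.1
  -- choose t with arc w (v t)
  obtain ⟨t, htk, hti, harc_w_t⟩ : ∃ t, t ≤ k ∧ i + 4 ≤ t ∧ T.arc w (v t) := by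
    by_cases hjk : j ≤ k
    · refine ⟨j - 1, by omega, by omega, ?_⟩
      rw [hD.2.1 j (by omega) hjk] at hw
      exact hw.1.2
    · have hje : j = k + 1 := by omega
      refine ⟨k, le_refl k, by omega, ?_⟩
      rw [hje, hD.2.2] at hw
      exact hw.1
  by_contra hcon
  by_cases huw : u = w
  · have := shortcut_aux T k v hpath i t 0 hik htk (fun _ => u) harc_vi_u
      (by omega) (huw ▸ harc_w_t)
    omega
  · have harc_uw : T.arc u w := (T.total u w huw).resolve_right hcon
    have := shortcut_aux T k v hpath i t 1 hik htk (fun s => if s = 0 then u else w)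
      harc_vi_u (by intro s hs; interval_cases s; simpa using harc_uw) (by simpa using harc_w_t)
    omega
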